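/- arXiv:1709.07712 — 2 statements merged into one kernel-verified Lean document; each statement's English description precedes it below -/
import Mathlib

section
/- Let G be a prime (fork, bull)-free graph containing an induced 6-cycle v_1...v_6 such that some vertex outside is adjacent to exactly {v_1,v_3,v_5}. Let S_{135} (resp. S_{246}) be the set of vertices outside the cycle adjacent to exactly {v_1,v_3,v_5} (resp. {v_2,v_4,v_6}). Then S_{135} and S_{246} are stable sets. -/
open SimpleGraph

/-- A homogeneous set: every vertex outside is complete or anticomplete to it. -/
def IsHomogeneousSet {V : Type*} (G : SimpleGraph V) (S : Set V) : Prop :=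
  ∀ v ∉ S, (∀ s ∈ S, G.Adj v s) ∨ (∀ s ∈ S, ¬ G.Adj v s)

/-- A graph is prime if its only homogeneous sets are trivial. -/
def IsPrime {V : Type*} (G : SimpleGraph V) : Prop :=
  ∀ S : Set V, IsHomogeneousSet G S → S = ∅ ∨ (∃ v, S = {v}) ∨ S = Set.univ

/-- `Free G H` : `G` contains no induced subgraph isomorphic to `H`. -/
def Free {V W : Type*} (G : SimpleGraph V) (H : SimpleGraph W) : Prop :=
  ¬ Nonempty (H ↪g G)

/-- The house: complement of the path on 5 vertices. -/
def house : SimpleGraph (Fin 5) := (pathGraph 5)ᶜ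

/-- The dart: a diamond on 0,1,2,3 (missing edge 2-3) plus a pendant vertex 4
adjacent to the degree-3 vertex 0. -/
def dart : SimpleGraph (Fin 5) :=
  SimpleGraph.fromRel (fun a b =>
    (a, b) ∈ [((0 : Fin 5), (1 : Fin 5)), (0, 2), (0, 3), (1, 2), (1, 3), (0, 4)])

/-- The co-dart: complement of the dart. -/
def codart : SimpleGraph (Fin 5) := dartᶜ

/-- The bull: triangle 0,1,2 with pendant vertices 3 (at 0) and 4 (at 1). -/
def bull : SimpleGraph (Fin 5) :=
  SimpleGraph.fromRel (fun a b =>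
    (a, b) ∈ [((0 : Fin 5), (1 : Fin 5)), (1, 2), (0, 2), (0, 3), (1, 4)])

/-- The fork (chair): path 0-1-2-3 plus a vertex 4 adjacent to 1. -/
def fork : SimpleGraph (Fin 5) :=
  SimpleGraph.fromRel (fun a b =>
    (a, b) ∈ [((0 : Fin 5), (1 : Fin 5)), (1, 2), (2, 3), (1, 4)])

/-- The hammer: triangle 0,1,2 with a path 2-3-4 attached. -/
def hammer : SimpleGraph (Fin 5) :=
  SimpleGraph.fromRel (fun a b =>
    (a, b) ∈ [((0 : Fin 5), (1 : Fin 5)), (1, 2), (0, 2), (2, 3), (3, 4)])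

/-- A graph is perfect if every induced subgraph has chromatic number equal to
its clique number. -/
def IsPerfect {V : Type*} (G : SimpleGraph V) : Prop :=
  ∀ S : Set V, (G.induce S).chromaticNumber = ((G.induce S).cliqueNum : ℕ∞)

/-- A realization of an induced cycle of length `ℓ` by nonempty pairwise disjoint sets
`A i`, with `A i` complete to `A (i+1)` and no other edges between distinct sets. -/
def CycleBlowup {V : Type*} (G : SimpleGraph V) {ℓ : ℕ} (A : ZMod ℓ → Set V) : Prop :=
  (∀ i, (A i).Nonempty) ∧
  (∀ i j, i ≠ j → Disjoint (A i) (A j)) ∧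
  (∀ i, ∀ x ∈ A i, ∀ y ∈ A (i + 1), G.Adj x y) ∧
  (∀ i j, i ≠ j → j ≠ i + 1 → i ≠ j + 1 → ∀ x ∈ A i, ∀ y ∈ A j, ¬ G.Adj x y)

lemma fork_adj_iff (i j : Fin 5) :
    fork.Adj i j ↔ i ≠ j ∧ (((i, j) ∈ [((0 : Fin 5), (1 : Fin 5)), (1, 2), (2, 3), (1, 4)]) ∨
      ((j, i) ∈ [((0 : Fin 5), (1 : Fin 5)), (1, 2), (2, 3), (1, 4)])) :=
  SimpleGraph.fromRel_adj _ i j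

instance : DecidableRel fork.Adj := fun i j => decidable_of_iff' _ (fork_adj_iff i j)

lemma fork_elim {V : Type*} {G : SimpleGraph V} (hf : _root_.Free G fork) {a b c d e : V}
    (hab : G.Adj a b) (hbc : G.Adj b c) (hcd : G.Adj c d) (hbe : G.Adj b e)
    (hac : ¬ G.Adj a c) (had : ¬ G.Adj a d) (hae : ¬ G.Adj a e)
    (hbd : ¬ G.Adj b d) (hce : ¬ G.Adj c e) (hde : ¬ G.Adj d e)
    (hne : a ≠ e) : False := by
  have nab := hab.ne
  have nbc := hbc.ne
  have ncd := hcd.ne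
  have nbe := hbe.ne
  have nac : a ≠ c := fun h => had (h ▸ hcd)
  have nad : a ≠ d := fun h => hbd (h ▸ hab.symm)
  have nbd : b ≠ d := fun h => had (h ▸ hab)
  have nce : c ≠ e := fun h => hde (h ▸ hcd.symm)
  have nde : d ≠ e := fun h => hbd (h.symm ▸ hbe)
  apply hf
  refine ⟨⟨⟨![a, b, c, d, e], ?_⟩, ?_⟩⟩
  · intro i j h
    fin_cases i <;> fin_cases j <;> simp_all <;> tauto
  · intro i j
    fin_cases i <;> fin_cases j <;>
      simp only [Matrix.cons_val_zero, Matrix.cons_val_one, Matrix.head_cons,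
        Matrix.cons_val_two, Matrix.tail_cons, Matrix.cons_val_three, Matrix.cons_val_four,
        Matrix.cons_val_succ, Function.Embedding.coeFn_mk] <;>
      first
        | exact iff_of_false (fun h => G.irrefl h) (by decide)
        | exact iff_of_true hab (by decide)
        | exact iff_of_true hab.symm (by decide)
        | exact iff_of_true hbc (by decide)
        | exact iff_of_true hbc.symm (by decide)
        | exact iff_of_true hcd (by decide)
        | exact iff_of_true hcd.symm (by decide)
        | exact iff_of_true hbe (by decide)
        | exact iff_of_true hbe.symm (by decide)
        | exact iff_of_false hac (by decide)
        | exact iff_of_false (fun h => hac h.symm) (by decide)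
        | exact iff_of_false had (by decide)
        | exact iff_of_false (fun h => had h.symm) (by decide)
        | exact iff_of_false hae (by decide)
        | exact iff_of_false (fun h => hae h.symm) (by decide)
        | exact iff_of_false hbd (by decide)
        | exact iff_of_false (fun h => hbd h.symm) (by decide)
        | exact iff_of_false hce (by decide)
        | exact iff_of_false (fun h => hce h.symm) (by decide)
        | exact iff_of_false hde (by decide)
        | exact iff_of_false (fun h => hde h.symm) (by decide)

lemma aux_distinguisher {V : Type*} {G : SimpleGraph V} (hfork : _root_.Free G fork)
    (p : Fin 6 → V) (hinj : Function.Injective p)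
    (hpadj : ∀ i j, G.Adj (p i) (p j) ↔ (cycleGraph 6).Adj i j)
    {a b z : V}
    (haR : ∀ i, a ≠ p i) (haA : ∀ i, G.Adj a (p i) ↔ (i = 0 ∨ i = 2 ∨ i = 4))
    (hbR : ∀ i, b ≠ p i) (hbA : ∀ i, G.Adj b (p i) ↔ (i = 0 ∨ i = 2 ∨ i = 4))
    (hab : G.Adj a b) (hza : G.Adj z a) (hzb : ¬ G.Adj z b) (hzbne : z ≠ b) :
    (∀ i, z ≠ p i) ∧ ∀ i, G.Adj z (p i) ↔ (i = 0 ∨ i = 2 ∨ i = 4) := by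
  have hzR : ∀ i, z ≠ p i := by
    intro i h
    by_cases hi : (i = (0 : Fin 6) ∨ i = 2 ∨ i = 4)
    · exact hzb (by rw [h]; exact ((hbA i).mpr hi).symm)
    · apply hi; apply (haA i).mp
      have : G.Adj (p i) a := by rw [← h]; exact hza
      exact this.symm
  refine ⟨hzR, ?_⟩
  have hP : ∀ i j : Fin 6, (cycleGraph 6).Adj i j → G.Adj (p i) (p j) :=
    fun i j h => (hpadj i j).mpr h
  have hPn : ∀ i j : Fin 6, ¬ (cycleGraph 6).Adj i j → ¬ G.Adj (p i) (p j) :=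
    fun i j h h2 => h ((hpadj i j).mp h2)
  have haP : ∀ i : Fin 6, (i = 0 ∨ i = 2 ∨ i = 4) → G.Adj a (p i) := fun i h => (haA i).mpr h
  have haPn : ∀ i : Fin 6, ¬(i = (0:Fin 6) ∨ i = 2 ∨ i = 4) → ¬ G.Adj a (p i) :=
    fun i h h2 => h ((haA i).mp h2)
  have hbP : ∀ i : Fin 6, (i = 0 ∨ i = 2 ∨ i = 4) → G.Adj b (p i) := fun i h => (hbA i).mpr h
  have hbPn : ∀ i : Fin 6, ¬(i = (0:Fin 6) ∨ i = 2 ∨ i = 4) → ¬ G.Adj b (p i) :=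
    fun i h h2 => h ((hbA i).mp h2)
  have hpne : ∀ i j : Fin 6, i ≠ j → p i ≠ p j := fun i j h h2 => h (hinj h2)
  by_cases h0 : G.Adj z (p 0)
  · by_cases h1 : G.Adj z (p 1)
    · by_cases h2 : G.Adj z (p 2)
      · by_cases h3 : G.Adj z (p 3)
        · by_cases h4 : G.Adj z (p 4)
          · by_cases h5 : G.Adj z (p 5)
            · exact (fork_elim (hf := hfork) h1.symm hza hab h3 (fun h => haPn 1 (by decide) h.symm) (fun h => hbPn 1 (by decide) h.symm) (hPn 1 3 (by decide)) hzb (haPn 3 (by decide)) (hbPn 3 (by decide)) (hpne 1 3 (by decide))).elim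
            · exact (fork_elim (hf := hfork) (hbP 0 (by decide)) h0.symm h3 (hP 0 5 (by decide)) (fun h => hzb h.symm) (hbPn 3 (by decide)) (hbPn 5 (by decide)) (hPn 0 3 (by decide)) h5 (hPn 3 5 (by decide)) (hbR 5)).elim
          · by_cases h5 : G.Adj z (p 5)
            · exact (fork_elim (hf := hfork) h1.symm hza hab h3 (fun h => haPn 1 (by decide) h.symm) (fun h => hbPn 1 (by decide) h.symm) (hPn 1 3 (by decide)) hzb (haPn 3 (by decide)) (hbPn 3 (by decide)) (hpne 1 3 (by decide))).elim
            · exact (fork_elim (hf := hfork) (hbP 0 (by decide)) h0.symm h3 (hP 0 5 (by decide)) (fun h => hzb h.symm) (hbPn 3 (by decide)) (hbPn 5 (by decide)) (hPn 0 3 (by decide)) h5 (hPn 3 5 (by decide)) (hbR 5)).elim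
        · by_cases h4 : G.Adj z (p 4)
          · by_cases h5 : G.Adj z (p 5)
            · exact (fork_elim (hf := hfork) (hbP 2 (by decide)) h2.symm h5 (hP 2 3 (by decide)) (fun h => hzb h.symm) (hbPn 5 (by decide)) (hbPn 3 (by decide)) (hPn 2 5 (by decide)) h3 (hPn 5 3 (by decide)) (hbR 3)).elim
            · exact (fork_elim (hf := hfork) (hbP 4 (by decide)) h4.symm h1 (hP 4 3 (by decide)) (fun h => hzb h.symm) (hbPn 1 (by decide)) (hbPn 3 (by decide)) (hPn 4 1 (by decide)) h3 (hPn 1 3 (by decide)) (hbR 3)).elim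
          · by_cases h5 : G.Adj z (p 5)
            · exact (fork_elim (hf := hfork) (hbP 2 (by decide)) h2.symm h5 (hP 2 3 (by decide)) (fun h => hzb h.symm) (hbPn 5 (by decide)) (hbPn 3 (by decide)) (hPn 2 5 (by decide)) h3 (hPn 5 3 (by decide)) (hbR 3)).elim
            · exact (fork_elim (hf := hfork) (hP 3 4 (by decide)) (haP 4 (by decide)).symm hza.symm (hP 4 5 (by decide)) (fun h => haPn 3 (by decide) h.symm) (fun h => h3 h.symm) (hPn 3 5 (by decide)) (fun h => h4 h.symm) (haPn 5 (by decide)) h5 (hpne 3 5 (by decide))).elim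
      · by_cases h3 : G.Adj z (p 3)
        · by_cases h4 : G.Adj z (p 4)
          · by_cases h5 : G.Adj z (p 5)
            · exact (fork_elim (hf := hfork) h1.symm hza hab h3 (fun h => haPn 1 (by decide) h.symm) (fun h => hbPn 1 (by decide) h.symm) (hPn 1 3 (by decide)) hzb (haPn 3 (by decide)) (hbPn 3 (by decide)) (hpne 1 3 (by decide))).elim
            · exact (fork_elim (hf := hfork) (hbP 0 (by decide)) h0.symm h3 (hP 0 5 (by decide)) (fun h => hzb h.symm) (hbPn 3 (by decide)) (hbPn 5 (by decide)) (hPn 0 3 (by decide)) h5 (hPn 3 5 (by decide)) (hbR 5)).elim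
          · by_cases h5 : G.Adj z (p 5)
            · exact (fork_elim (hf := hfork) h1.symm hza hab h3 (fun h => haPn 1 (by decide) h.symm) (fun h => hbPn 1 (by decide) h.symm) (hPn 1 3 (by decide)) hzb (haPn 3 (by decide)) (hbPn 3 (by decide)) (hpne 1 3 (by decide))).elim
            · exact (fork_elim (hf := hfork) (hbP 0 (by decide)) h0.symm h3 (hP 0 5 (by decide)) (fun h => hzb h.symm) (hbPn 3 (by decide)) (hbPn 5 (by decide)) (hPn 0 3 (by decide)) h5 (hPn 3 5 (by decide)) (hbR 5)).elim
        · by_cases h4 : G.Adj z (p 4)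
          · by_cases h5 : G.Adj z (p 5)
            · exact (fork_elim (hf := hfork) (hbP 2 (by decide)) (hP 2 1 (by decide)) h1.symm (hP 2 3 (by decide)) (hbPn 1 (by decide)) (fun h => hzb h.symm) (hbPn 3 (by decide)) (fun h => h2 h.symm) (hPn 1 3 (by decide)) h3 (hbR 3)).elim
            · exact (fork_elim (hf := hfork) (hbP 2 (by decide)) (hP 2 1 (by decide)) h1.symm (hP 2 3 (by decide)) (hbPn 1 (by decide)) (fun h => hzb h.symm) (hbPn 3 (by decide)) (fun h => h2 h.symm) (hPn 1 3 (by decide)) h3 (hbR 3)).elim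
          · by_cases h5 : G.Adj z (p 5)
            · exact (fork_elim (hf := hfork) (hbP 2 (by decide)) (hP 2 1 (by decide)) h1.symm (hP 2 3 (by decide)) (hbPn 1 (by decide)) (fun h => hzb h.symm) (hbPn 3 (by decide)) (fun h => h2 h.symm) (hPn 1 3 (by decide)) h3 (hbR 3)).elim
            · exact (fork_elim (hf := hfork) (hbP 2 (by decide)) (hP 2 1 (by decide)) h1.symm (hP 2 3 (by decide)) (hbPn 1 (by decide)) (fun h => hzb h.symm) (hbPn 3 (by decide)) (fun h => h2 h.symm) (hPn 1 3 (by decide)) h3 (hbR 3)).elim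
    · by_cases h2 : G.Adj z (p 2)
      · by_cases h3 : G.Adj z (p 3)
        · by_cases h4 : G.Adj z (p 4)
          · by_cases h5 : G.Adj z (p 5)
            · exact (fork_elim (hf := hfork) (hbP 0 (by decide)) h0.symm h3 (hP 0 1 (by decide)) (fun h => hzb h.symm) (hbPn 3 (by decide)) (hbPn 1 (by decide)) (hPn 0 3 (by decide)) h1 (hPn 3 1 (by decide)) (hbR 1)).elim
            · exact (fork_elim (hf := hfork) (hbP 0 (by decide)) h0.symm h3 (hP 0 1 (by decide)) (fun h => hzb h.symm) (hbPn 3 (by decide)) (hbPn 1 (by decide)) (hPn 0 3 (by decide)) h1 (hPn 3 1 (by decide)) (hbR 1)).elim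
          · by_cases h5 : G.Adj z (p 5)
            · exact (fork_elim (hf := hfork) (hbP 0 (by decide)) h0.symm h3 (hP 0 1 (by decide)) (fun h => hzb h.symm) (hbPn 3 (by decide)) (hbPn 1 (by decide)) (hPn 0 3 (by decide)) h1 (hPn 3 1 (by decide)) (hbR 1)).elim
            · exact (fork_elim (hf := hfork) (hbP 0 (by decide)) h0.symm h3 (hP 0 1 (by decide)) (fun h => hzb h.symm) (hbPn 3 (by decide)) (hbPn 1 (by decide)) (hPn 0 3 (by decide)) h1 (hPn 3 1 (by decide)) (hbR 1)).elim
        · by_cases h4 : G.Adj z (p 4)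
          · by_cases h5 : G.Adj z (p 5)
            · exact (fork_elim (hf := hfork) (hbP 2 (by decide)) h2.symm h5 (hP 2 1 (by decide)) (fun h => hzb h.symm) (hbPn 5 (by decide)) (hbPn 1 (by decide)) (hPn 2 5 (by decide)) h1 (hPn 5 1 (by decide)) (hbR 1)).elim
            · exact fun i => by
                fin_cases i
                exacts [iff_of_true h0 (by decide), iff_of_false h1 (by decide),
                  iff_of_true h2 (by decide), iff_of_false h3 (by decide),
                  iff_of_true h4 (by decide), iff_of_false h5 (by decide)]
          · by_cases h5 : G.Adj z (p 5)
            · exact (fork_elim (hf := hfork) (hbP 2 (by decide)) h2.symm h5 (hP 2 1 (by decide)) (fun h => hzb h.symm) (hbPn 5 (by decide)) (hbPn 1 (by decide)) (hPn 2 5 (by decide)) h1 (hPn 5 1 (by decide)) (hbR 1)).elim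
            · exact (fork_elim (hf := hfork) h0 (hbP 0 (by decide)).symm (hbP 4 (by decide)) (hP 0 1 (by decide)) hzb h4 h1 (hPn 0 4 (by decide)) (hbPn 1 (by decide)) (hPn 4 1 (by decide)) (hzR 1)).elim
      · by_cases h3 : G.Adj z (p 3)
        · by_cases h4 : G.Adj z (p 4)
          · by_cases h5 : G.Adj z (p 5)
            · exact (fork_elim (hf := hfork) (hbP 0 (by decide)) h0.symm h3 (hP 0 1 (by decide)) (fun h => hzb h.symm) (hbPn 3 (by decide)) (hbPn 1 (by decide)) (hPn 0 3 (by decide)) h1 (hPn 3 1 (by decide)) (hbR 1)).elim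
            · exact (fork_elim (hf := hfork) (hbP 0 (by decide)) h0.symm h3 (hP 0 1 (by decide)) (fun h => hzb h.symm) (hbPn 3 (by decide)) (hbPn 1 (by decide)) (hPn 0 3 (by decide)) h1 (hPn 3 1 (by decide)) (hbR 1)).elim
          · by_cases h5 : G.Adj z (p 5)
            · exact (fork_elim (hf := hfork) (hbP 0 (by decide)) h0.symm h3 (hP 0 1 (by decide)) (fun h => hzb h.symm) (hbPn 3 (by decide)) (hbPn 1 (by decide)) (hPn 0 3 (by decide)) h1 (hPn 3 1 (by decide)) (hbR 1)).elim
            · exact (fork_elim (hf := hfork) (hbP 0 (by decide)) h0.symm h3 (hP 0 1 (by decide)) (fun h => hzb h.symm) (hbPn 3 (by decide)) (hbPn 1 (by decide)) (hPn 0 3 (by decide)) h1 (hPn 3 1 (by decide)) (hbR 1)).elim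
        · by_cases h4 : G.Adj z (p 4)
          · by_cases h5 : G.Adj z (p 5)
            · exact (fork_elim (hf := hfork) (hP 1 2 (by decide)) (haP 2 (by decide)).symm hza.symm (hP 2 3 (by decide)) (fun h => haPn 1 (by decide) h.symm) (fun h => h1 h.symm) (hPn 1 3 (by decide)) (fun h => h2 h.symm) (haPn 3 (by decide)) h3 (hpne 1 3 (by decide))).elim
            · exact (fork_elim (hf := hfork) h0 (hbP 0 (by decide)).symm (hbP 2 (by decide)) (hP 0 5 (by decide)) hzb h2 h5 (hPn 0 2 (by decide)) (hbPn 5 (by decide)) (hPn 2 5 (by decide)) (hzR 5)).elim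
          · by_cases h5 : G.Adj z (p 5)
            · exact (fork_elim (hf := hfork) (hbP 4 (by decide)) (hP 4 5 (by decide)) h5.symm (hP 4 3 (by decide)) (hbPn 5 (by decide)) (fun h => hzb h.symm) (hbPn 3 (by decide)) (fun h => h4 h.symm) (hPn 5 3 (by decide)) h3 (hbR 3)).elim
            · exact (fork_elim (hf := hfork) hza (haP 2 (by decide)) (hP 2 1 (by decide)) (haP 4 (by decide)) h2 h1 h4 (haPn 1 (by decide)) (hPn 2 4 (by decide)) (hPn 1 4 (by decide)) (hzR 4)).elim
  · by_cases h1 : G.Adj z (p 1)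
    · by_cases h2 : G.Adj z (p 2)
      · by_cases h3 : G.Adj z (p 3)
        · by_cases h4 : G.Adj z (p 4)
          · by_cases h5 : G.Adj z (p 5)
            · exact (fork_elim (hf := hfork) h1.symm hza hab h3 (fun h => haPn 1 (by decide) h.symm) (fun h => hbPn 1 (by decide) h.symm) (hPn 1 3 (by decide)) hzb (haPn 3 (by decide)) (hbPn 3 (by decide)) (hpne 1 3 (by decide))).elim
            · exact (fork_elim (hf := hfork) (hbP 0 (by decide)) (hP 0 1 (by decide)) h1.symm (hP 0 5 (by decide)) (hbPn 1 (by decide)) (fun h => hzb h.symm) (hbPn 5 (by decide)) (fun h => h0 h.symm) (hPn 1 5 (by decide)) h5 (hbR 5)).elim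
          · by_cases h5 : G.Adj z (p 5)
            · exact (fork_elim (hf := hfork) (hbP 0 (by decide)).symm (hbP 2 (by decide)) h2.symm (hbP 4 (by decide)) (hPn 0 2 (by decide)) (fun h => h0 h.symm) (hPn 0 4 (by decide)) (fun h => hzb h.symm) (hPn 2 4 (by decide)) h4 (hpne 0 4 (by decide))).elim
            · exact (fork_elim (hf := hfork) (hbP 0 (by decide)) (hP 0 1 (by decide)) h1.symm (hP 0 5 (by decide)) (hbPn 1 (by decide)) (fun h => hzb h.symm) (hbPn 5 (by decide)) (fun h => h0 h.symm) (hPn 1 5 (by decide)) h5 (hbR 5)).elim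
        · by_cases h4 : G.Adj z (p 4)
          · by_cases h5 : G.Adj z (p 5)
            · exact (fork_elim (hf := hfork) (hbP 2 (by decide)) h2.symm h5 (hP 2 3 (by decide)) (fun h => hzb h.symm) (hbPn 5 (by decide)) (hbPn 3 (by decide)) (hPn 2 5 (by decide)) h3 (hPn 5 3 (by decide)) (hbR 3)).elim
            · exact (fork_elim (hf := hfork) (hbP 0 (by decide)) (hP 0 1 (by decide)) h1.symm (hP 0 5 (by decide)) (hbPn 1 (by decide)) (fun h => hzb h.symm) (hbPn 5 (by decide)) (fun h => h0 h.symm) (hPn 1 5 (by decide)) h5 (hbR 5)).elim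
          · by_cases h5 : G.Adj z (p 5)
            · exact (fork_elim (hf := hfork) (hbP 2 (by decide)) h2.symm h5 (hP 2 3 (by decide)) (fun h => hzb h.symm) (hbPn 5 (by decide)) (hbPn 3 (by decide)) (hPn 2 5 (by decide)) h3 (hPn 5 3 (by decide)) (hbR 3)).elim
            · exact (fork_elim (hf := hfork) (hbP 0 (by decide)) (hP 0 1 (by decide)) h1.symm (hP 0 5 (by decide)) (hbPn 1 (by decide)) (fun h => hzb h.symm) (hbPn 5 (by decide)) (fun h => h0 h.symm) (hPn 1 5 (by decide)) h5 (hbR 5)).elim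
      · by_cases h3 : G.Adj z (p 3)
        · by_cases h4 : G.Adj z (p 4)
          · by_cases h5 : G.Adj z (p 5)
            · exact (fork_elim (hf := hfork) (hbP 0 (by decide)).symm (hbP 4 (by decide)) h4.symm (hbP 2 (by decide)) (hPn 0 4 (by decide)) (fun h => h0 h.symm) (hPn 0 2 (by decide)) (fun h => hzb h.symm) (hPn 4 2 (by decide)) h2 (hpne 0 2 (by decide))).elim
            · exact (fork_elim (hf := hfork) (hbP 0 (by decide)) (hP 0 1 (by decide)) h1.symm (hP 0 5 (by decide)) (hbPn 1 (by decide)) (fun h => hzb h.symm) (hbPn 5 (by decide)) (fun h => h0 h.symm) (hPn 1 5 (by decide)) h5 (hbR 5)).elim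
          · by_cases h5 : G.Adj z (p 5)
            · exact (fork_elim (hf := hfork) h1.symm hza hab h3 (fun h => haPn 1 (by decide) h.symm) (fun h => hbPn 1 (by decide) h.symm) (hPn 1 3 (by decide)) hzb (haPn 3 (by decide)) (hbPn 3 (by decide)) (hpne 1 3 (by decide))).elim
            · exact (fork_elim (hf := hfork) (hbP 0 (by decide)) (hP 0 1 (by decide)) h1.symm (hP 0 5 (by decide)) (hbPn 1 (by decide)) (fun h => hzb h.symm) (hbPn 5 (by decide)) (fun h => h0 h.symm) (hPn 1 5 (by decide)) h5 (hbR 5)).elim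
        · by_cases h4 : G.Adj z (p 4)
          · by_cases h5 : G.Adj z (p 5)
            · exact (fork_elim (hf := hfork) (hbP 2 (by decide)) (hP 2 1 (by decide)) h1.symm (hP 2 3 (by decide)) (hbPn 1 (by decide)) (fun h => hzb h.symm) (hbPn 3 (by decide)) (fun h => h2 h.symm) (hPn 1 3 (by decide)) h3 (hbR 3)).elim
            · exact (fork_elim (hf := hfork) (hbP 0 (by decide)) (hP 0 1 (by decide)) h1.symm (hP 0 5 (by decide)) (hbPn 1 (by decide)) (fun h => hzb h.symm) (hbPn 5 (by decide)) (fun h => h0 h.symm) (hPn 1 5 (by decide)) h5 (hbR 5)).elim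
          · by_cases h5 : G.Adj z (p 5)
            · exact (fork_elim (hf := hfork) (hbP 2 (by decide)) (hP 2 1 (by decide)) h1.symm (hP 2 3 (by decide)) (hbPn 1 (by decide)) (fun h => hzb h.symm) (hbPn 3 (by decide)) (fun h => h2 h.symm) (hPn 1 3 (by decide)) h3 (hbR 3)).elim
            · exact (fork_elim (hf := hfork) (hbP 0 (by decide)) (hP 0 1 (by decide)) h1.symm (hP 0 5 (by decide)) (hbPn 1 (by decide)) (fun h => hzb h.symm) (hbPn 5 (by decide)) (fun h => h0 h.symm) (hPn 1 5 (by decide)) h5 (hbR 5)).elim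
    · by_cases h2 : G.Adj z (p 2)
      · by_cases h3 : G.Adj z (p 3)
        · by_cases h4 : G.Adj z (p 4)
          · by_cases h5 : G.Adj z (p 5)
            · exact (fork_elim (hf := hfork) (hbP 0 (by decide)) (hP 0 5 (by decide)) h5.symm (hP 0 1 (by decide)) (hbPn 5 (by decide)) (fun h => hzb h.symm) (hbPn 1 (by decide)) (fun h => h0 h.symm) (hPn 5 1 (by decide)) h1 (hbR 1)).elim
            · exact (fork_elim (hf := hfork) (hP 1 0 (by decide)) (haP 0 (by decide)).symm hza.symm (hP 0 5 (by decide)) (fun h => haPn 1 (by decide) h.symm) (fun h => h1 h.symm) (hPn 1 5 (by decide)) (fun h => h0 h.symm) (haPn 5 (by decide)) h5 (hpne 1 5 (by decide))).elim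
          · by_cases h5 : G.Adj z (p 5)
            · exact (fork_elim (hf := hfork) (hbP 0 (by decide)) (hP 0 5 (by decide)) h5.symm (hP 0 1 (by decide)) (hbPn 5 (by decide)) (fun h => hzb h.symm) (hbPn 1 (by decide)) (fun h => h0 h.symm) (hPn 5 1 (by decide)) h1 (hbR 1)).elim
            · exact (fork_elim (hf := hfork) (hbP 4 (by decide)) (hP 4 3 (by decide)) h3.symm (hP 4 5 (by decide)) (hbPn 3 (by decide)) (fun h => hzb h.symm) (hbPn 5 (by decide)) (fun h => h4 h.symm) (hPn 3 5 (by decide)) h5 (hbR 5)).elim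
        · by_cases h4 : G.Adj z (p 4)
          · by_cases h5 : G.Adj z (p 5)
            · exact (fork_elim (hf := hfork) (hbP 0 (by decide)) (hP 0 5 (by decide)) h5.symm (hP 0 1 (by decide)) (hbPn 5 (by decide)) (fun h => hzb h.symm) (hbPn 1 (by decide)) (fun h => h0 h.symm) (hPn 5 1 (by decide)) h1 (hbR 1)).elim
            · exact (fork_elim (hf := hfork) h2 (hbP 2 (by decide)).symm (hbP 0 (by decide)) (hP 2 3 (by decide)) hzb h0 h3 (hPn 2 0 (by decide)) (hbPn 3 (by decide)) (hPn 0 3 (by decide)) (hzR 3)).elim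
          · by_cases h5 : G.Adj z (p 5)
            · exact (fork_elim (hf := hfork) (hbP 0 (by decide)) (hP 0 5 (by decide)) h5.symm (hP 0 1 (by decide)) (hbPn 5 (by decide)) (fun h => hzb h.symm) (hbPn 1 (by decide)) (fun h => h0 h.symm) (hPn 5 1 (by decide)) h1 (hbR 1)).elim
            · exact (fork_elim (hf := hfork) hza (haP 0 (by decide)) (hP 0 1 (by decide)) (haP 4 (by decide)) h0 h1 h4 (haPn 1 (by decide)) (hPn 0 4 (by decide)) (hPn 1 4 (by decide)) (hzR 4)).elim
      · by_cases h3 : G.Adj z (p 3)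
        · by_cases h4 : G.Adj z (p 4)
          · by_cases h5 : G.Adj z (p 5)
            · exact (fork_elim (hf := hfork) (hbP 0 (by decide)) (hP 0 5 (by decide)) h5.symm (hP 0 1 (by decide)) (hbPn 5 (by decide)) (fun h => hzb h.symm) (hbPn 1 (by decide)) (fun h => h0 h.symm) (hPn 5 1 (by decide)) h1 (hbR 1)).elim
            · exact (fork_elim (hf := hfork) (hbP 2 (by decide)) (hP 2 3 (by decide)) h3.symm (hP 2 1 (by decide)) (hbPn 3 (by decide)) (fun h => hzb h.symm) (hbPn 1 (by decide)) (fun h => h2 h.symm) (hPn 3 1 (by decide)) h1 (hbR 1)).elim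
          · by_cases h5 : G.Adj z (p 5)
            · exact (fork_elim (hf := hfork) (hbP 0 (by decide)) (hP 0 5 (by decide)) h5.symm (hP 0 1 (by decide)) (hbPn 5 (by decide)) (fun h => hzb h.symm) (hbPn 1 (by decide)) (fun h => h0 h.symm) (hPn 5 1 (by decide)) h1 (hbR 1)).elim
            · exact (fork_elim (hf := hfork) (hbP 2 (by decide)) (hP 2 3 (by decide)) h3.symm (hP 2 1 (by decide)) (hbPn 3 (by decide)) (fun h => hzb h.symm) (hbPn 1 (by decide)) (fun h => h2 h.symm) (hPn 3 1 (by decide)) h1 (hbR 1)).elim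
        · by_cases h4 : G.Adj z (p 4)
          · by_cases h5 : G.Adj z (p 5)
            · exact (fork_elim (hf := hfork) (hbP 0 (by decide)) (hP 0 5 (by decide)) h5.symm (hP 0 1 (by decide)) (hbPn 5 (by decide)) (fun h => hzb h.symm) (hbPn 1 (by decide)) (fun h => h0 h.symm) (hPn 5 1 (by decide)) h1 (hbR 1)).elim
            · exact (fork_elim (hf := hfork) hza (haP 0 (by decide)) (hP 0 5 (by decide)) (haP 2 (by decide)) h0 h5 h2 (haPn 5 (by decide)) (hPn 0 2 (by decide)) (hPn 5 2 (by decide)) (hzR 2)).elim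
          · by_cases h5 : G.Adj z (p 5)
            · exact (fork_elim (hf := hfork) (hbP 0 (by decide)) (hP 0 5 (by decide)) h5.symm (hP 0 1 (by decide)) (hbPn 5 (by decide)) (fun h => hzb h.symm) (hbPn 1 (by decide)) (fun h => h0 h.symm) (hPn 5 1 (by decide)) h1 (hbR 1)).elim
            · exact (fork_elim (hf := hfork) hza (haP 0 (by decide)) (hP 0 1 (by decide)) (haP 4 (by decide)) h0 h1 h4 (haPn 1 (by decide)) (hPn 0 4 (by decide)) (hPn 1 4 (by decide)) (hzR 4)).elim

lemma stable_aux {V : Type*} {G : SimpleGraph V} (hprime : IsPrime G)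
    (hfork : _root_.Free G fork)
    (p : Fin 6 → V) (hinj : Function.Injective p)
    (hpadj : ∀ i j, G.Adj (p i) (p j) ↔ (cycleGraph 6).Adj i j)
    {x y : V}
    (hxR : ∀ i, x ≠ p i) (hxA : ∀ i, G.Adj x (p i) ↔ (i = 0 ∨ i = 2 ∨ i = 4))
    (hyR : ∀ i, y ≠ p i) (hyA : ∀ i, G.Adj y (p i) ↔ (i = 0 ∨ i = 2 ∨ i = 4))
    (hxy : G.Adj x y) : False := by
  set inS : V → Prop :=
    fun v => (∀ i, v ≠ p i) ∧ ∀ i, (G.Adj v (p i) ↔ (i = 0 ∨ i = 2 ∨ i = 4)) with hinS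
  set R : V → V → Prop := fun u w => G.Adj u w ∧ inS u ∧ inS w with hR
  set M : Set V := {v | Relation.ReflTransGen R x v} with hM
  have hxM : x ∈ M := Relation.ReflTransGen.refl
  have hyM : y ∈ M := Relation.ReflTransGen.single ⟨hxy, ⟨hxR, hxA⟩, ⟨hyR, hyA⟩⟩
  have hMS : ∀ v ∈ M, inS v := by
    intro v hv
    induction hv with
    | refl => exact ⟨hxR, hxA⟩
    | tail _ h _ => exact h.2.2
  have hhom : IsHomogeneousSet G M := by
    intro v hv
    have claim : ∀ w ∈ M, (G.Adj v w ↔ G.Adj v x) := by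
      intro w hw
      induction hw with
      | refl => exact Iff.rfl
      | @tail u w hxu huw ih =>
        have huM : u ∈ M := hxu
        have hwM : w ∈ M := hxu.tail huw
        have hvu : v ≠ u := fun h => hv (h ▸ huM)
        have hvw : v ≠ w := fun h => hv (h ▸ hwM)
        by_cases hw1 : G.Adj v w <;> by_cases hu1 : G.Adj v u
        · exact iff_of_true hw1 (ih.mp hu1)
        · -- v adj w, not u : v distinguishes the edge w-u
          exfalso
          have hz := aux_distinguisher hfork p hinj hpadj huw.2.2.1 huw.2.2.2
            huw.2.1.1 huw.2.1.2 huw.1.symm hw1 hu1 hvu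
          exact hv (hwM.tail ⟨hw1.symm, huw.2.2, hz⟩)
        · exfalso
          have hz := aux_distinguisher hfork p hinj hpadj huw.2.1.1 huw.2.1.2
            huw.2.2.1 huw.2.2.2 huw.1 hu1 hw1 hvw
          exact hv (huM.tail ⟨hu1.symm, huw.2.1, hz⟩)
        · exact iff_of_false hw1 (fun h => hu1 (ih.mpr h))
    by_cases hvx : G.Adj v x
    · exact Or.inl (fun s hs => (claim s hs).mpr hvx)
    · exact Or.inr (fun s hs h => hvx ((claim s hs).mp h))
  rcases hprime M hhom with h | ⟨w, h⟩ | h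
  · rw [h] at hxM; exact hxM
  · rw [h] at hxM hyM
    exact hxy.ne (hxM.trans hyM.symm)
  · have : p 0 ∈ M := by rw [h]; trivial
    exact (hMS _ this).1 0 rfl

/-- In a prime (fork, bull)-free graph with an induced 6-cycle `c` having an outside
vertex adjacent exactly to the alternate vertices `c 0, c 2, c 4`, the sets `S₁₃₅` and
`S₂₄₆` of outside vertices seeing exactly `{c 0, c 2, c 4}` (resp. `{c 1, c 3, c 5}`)
are stable. -/
theorem stmt18 {V : Type*} [Fintype V] (G : SimpleGraph V)
    (hprime : IsPrime G) (hfork : _root_.Free G fork) (hbull : _root_.Free G bull)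
    (c : cycleGraph 6 ↪g G)
    (hex : ∃ x, x ∉ Set.range c ∧
      {i | G.Adj x (c i)} = ({0, 2, 4} : Set (Fin 6))) :
    (∀ x y, x ∉ Set.range c → {i | G.Adj x (c i)} = ({0, 2, 4} : Set (Fin 6)) →
      y ∉ Set.range c → {i | G.Adj y (c i)} = ({0, 2, 4} : Set (Fin 6)) →
      ¬ G.Adj x y) ∧
    (∀ x y, x ∉ Set.range c → {i | G.Adj x (c i)} = ({1, 3, 5} : Set (Fin 6)) →
      y ∉ Set.range c → {i | G.Adj y (c i)} = ({1, 3, 5} : Set (Fin 6)) →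
      ¬ G.Adj x y) := by
  constructor
  · intro x y hx hxA hy hyA hxy
    refine stable_aux hprime hfork (fun i => c i) c.injective
      (fun i j => c.map_rel_iff) ?_ ?_ ?_ ?_ hxy
    · exact fun i h => hx ⟨i, h.symm⟩
    · exact fun i => (Set.ext_iff.mp hxA i).trans (by simp)
    · exact fun i h => hy ⟨i, h.symm⟩
    · exact fun i => (Set.ext_iff.mp hyA i).trans (by simp)
  · intro x y hx hxA hy hyA hxy
    have hrot : ∀ i j : Fin 6, (cycleGraph 6).Adj (i + 1) (j + 1) ↔ (cycleGraph 6).Adj i j := by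
      decide
    refine stable_aux hprime hfork (fun i => c (i + 1))
      (fun i j h => by simpa using c.injective h)
      (fun i j => (c.map_rel_iff).trans (hrot i j)) ?_ ?_ ?_ ?_ hxy
    · exact fun i h => hx ⟨i + 1, h.symm⟩
    · exact fun i => (Set.ext_iff.mp hxA (i + 1)).trans
        (by simp only [Set.mem_insert_iff, Set.mem_singleton_iff]; fin_cases i <;> decide)
    · exact fun i h => hy ⟨i + 1, h.symm⟩
    · exact fun i => (Set.ext_iff.mp hyA (i + 1)).trans
        (by simp only [Set.mem_insert_iff, Set.mem_singleton_iff]; fin_cases i <;> decide)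
end

section
/- The chromatic number of a cycle C_ℓ with positive integer vertex weights w_1,...,w_ℓ, ℓ odd, ℓ ≥ 5, in the weighted coloring sense (find the minimum number k of stable sets such that vertex i belongs to at least w_i of them) equals max( max_i (w_i + w_{i+1}), ⌈ 2(w_1+...+w_ℓ)/(ℓ−1) ⌉ ), where indices are mod ℓ. -/
open SimpleGraph

namespace Stmt19Aux

lemma sum_range_cast {n : ℕ} [NeZero n] (f : ZMod n → ℕ) :
    ∑ j ∈ Finset.range n, f (j : ZMod n) = ∑ i : ZMod n, f i := by
  refine Finset.sum_nbij' (i := fun j => ((j : ZMod n))) (j := fun a => a.val) ?_ ?_ ?_ ?_ ?_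
  · intro a _; exact Finset.mem_univ _
  · intro a _; exact Finset.mem_range.mpr (ZMod.val_lt a)
  · intro a ha; exact ZMod.val_cast_of_lt (Finset.mem_range.mp ha)
  · intro a _; exact ZMod.natCast_rightInverse a
  · intro a _; rfl

lemma sum_ind {n : ℕ} [NeZero n] (F : Finset (ZMod n)) :
    ∑ i : ZMod n, (if i ∈ F then 1 else 0) = F.card := by
  rw [← Finset.card_filter]
  congr 1
  exact Finset.filter_univ_mem F

lemma stable_card {n : ℕ} [NeZero n] (F : Finset (ZMod n))
    (hst : ∀ a ∈ F, ∀ b ∈ F, ¬ (a = b + 1 ∨ b = a + 1)) : 2 * F.card ≤ n := by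
  have key : ∀ i : ZMod n, (if i ∈ F then 1 else 0) + (if i + 1 ∈ F then 1 else 0) ≤ 1 := by
    intro i
    split_ifs with h1 h2
    · exact absurd (Or.inr rfl) (hst i h1 (i + 1) h2)
    · omega
    · omega
    · omega
  have h1 : ∑ i : ZMod n, ((if i ∈ F then 1 else 0) + (if i + 1 ∈ F then 1 else 0)) ≤ n := by
    calc ∑ i : ZMod n, ((if i ∈ F then 1 else 0) + (if i + 1 ∈ F then 1 else 0))
        ≤ ∑ _i : ZMod n, 1 := Finset.sum_le_sum (fun i _ => key i)
      _ = n := by simp [ZMod.card]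
  rw [Finset.sum_add_distrib, sum_ind] at h1
  have h2 : ∑ i : ZMod n, (if i + 1 ∈ F then 1 else 0) = F.card := by
    rw [← sum_ind F]
    exact Fintype.sum_equiv (Equiv.addRight (1 : ZMod n)) _ _ (fun i => rfl)
  omega

variable (ℓ k : ℕ) (w : ZMod ℓ → ℕ)

/-- weight as a function on naturals -/
def wn (n : ℕ) : ℕ := w (n : ZMod ℓ)

/-- total weight -/
def Wn : ℕ := ∑ j ∈ Finset.range ℓ, wn ℓ w j

/-- slack capacity on edge (n, n+1) -/
def capf (n : ℕ) : ℕ := k - (wn ℓ w n + wn ℓ w (n+1))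

/-- partial sums of capacities -/
def C (n : ℕ) : ℕ := ∑ j ∈ Finset.range n, capf ℓ k w j

/-- total slack needed -/
def T : ℕ := (k - Wn ℓ w % k) % k

/-- slack at edge (n, n+1) -/
def t (n : ℕ) : ℕ := min (C ℓ k w (n+1)) (T ℓ k w) - min (C ℓ k w n) (T ℓ k w)

/-- start of color arc of vertex n -/
def s (n : ℕ) : ℕ := ∑ j ∈ Finset.range n, (wn ℓ w j + t ℓ k w j)

/-- color arc of vertex n -/
def A (n : ℕ) : Finset (ZMod k) :=
  (Finset.range (wn ℓ w n)).image fun r => ((s ℓ k w n + r : ℕ) : ZMod k)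

lemma C_succ (n : ℕ) : C ℓ k w (n+1) = C ℓ k w n + capf ℓ k w n :=
  Finset.sum_range_succ _ n

lemma t_le_capf (n : ℕ) : t ℓ k w n ≤ capf ℓ k w n := by
  have := C_succ ℓ k w n
  unfold t
  omega

lemma sum_t (n : ℕ) : ∑ j ∈ Finset.range n, t ℓ k w j = min (C ℓ k w n) (T ℓ k w) := by
  induction n with
  | zero => simp [C]
  | succ n ih =>
    rw [Finset.sum_range_succ, ih]
    have := C_succ ℓ k w n
    unfold t
    omega

lemma s_succ (n : ℕ) : s ℓ k w (n+1) = s ℓ k w n + (wn ℓ w n + t ℓ k w n) :=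
  Finset.sum_range_succ _ n

section hyp

variable (hedge : ∀ n, wn ℓ w n + wn ℓ w (n+1) ≤ k) (hwpos : ∀ n, 1 ≤ wn ℓ w n)
  (hk : 0 < k)

include hedge hwpos hk

/-- the key disjointness property of consecutive arcs -/
lemma disjA (n : ℕ) (c : ZMod k) (h1 : c ∈ A ℓ k w n) (h2 : c ∈ A ℓ k w (n+1)) : False := by
  obtain ⟨r, hr, rfl⟩ := Finset.mem_image.mp h1
  obtain ⟨r', hr', heq⟩ := Finset.mem_image.mp h2
  rw [Finset.mem_range] at hr hr'
  rw [s_succ] at heq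
  have hle : s ℓ k w n + r ≤ s ℓ k w n + (wn ℓ w n + t ℓ k w n) + r' := by omega
  have hdvd : k ∣ (s ℓ k w n + (wn ℓ w n + t ℓ k w n) + r') - (s ℓ k w n + r) := by
    rw [ZMod.natCast_eq_natCast_iff] at heq
    exact (Nat.modEq_iff_dvd' hle).mp heq.symm
  set d := (s ℓ k w n + (wn ℓ w n + t ℓ k w n) + r') - (s ℓ k w n + r) with hd
  have hd1 : 1 ≤ d := by omega
  have hcap : t ℓ k w n ≤ capf ℓ k w n := t_le_capf ℓ k w n
  have hedge' := hedge n
  have hdk : d < k := by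
    unfold capf at hcap
    omega
  exact absurd (Nat.le_of_dvd (by omega) hdvd) (by omega)

lemma card_A (n : ℕ) : (A ℓ k w n).card = wn ℓ w n := by
  rw [A, Finset.card_image_of_injOn, Finset.card_range]
  intro r hr r' hr' h
  rw [Finset.mem_coe, Finset.mem_range] at hr hr'
  have hwk : wn ℓ w n < k := by
    have := hedge n
    have := hwpos (n+1)
    omega
  rcases le_total r r' with hle | hle
  · have : k ∣ r' - r := by
      rw [ZMod.natCast_eq_natCast_iff] at h
      exact (Nat.modEq_iff_dvd' (by omega)).mp (Nat.ModEq.add_left_cancel' _ h)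
    rcases Nat.eq_zero_or_pos (r' - r) with h0 | h0
    · omega
    · exact absurd (Nat.le_of_dvd h0 this) (by omega)
  · have : k ∣ r - r' := by
      rw [ZMod.natCast_eq_natCast_iff] at h
      exact (Nat.modEq_iff_dvd' (by omega)).mp (Nat.ModEq.add_left_cancel' _ h.symm)
    rcases Nat.eq_zero_or_pos (r - r') with h0 | h0
    · omega
    · exact absurd (Nat.le_of_dvd h0 this) (by omega)

end hyp

lemma wn_ell : wn ℓ w ℓ = wn ℓ w 0 := by
  unfold wn
  norm_num

lemma sum_wn_shift : ∑ j ∈ Finset.range ℓ, wn ℓ w (j+1) = Wn ℓ w := by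
  have h1 : ∑ j ∈ Finset.range (ℓ+1), wn ℓ w j
      = ∑ j ∈ Finset.range ℓ, wn ℓ w (j+1) + wn ℓ w 0 := Finset.sum_range_succ' _ ℓ
  have h2 : ∑ j ∈ Finset.range (ℓ+1), wn ℓ w j
      = ∑ j ∈ Finset.range ℓ, wn ℓ w j + wn ℓ w ℓ := Finset.sum_range_succ _ ℓ
  have h3 := wn_ell ℓ w
  unfold Wn
  omega

section hyp2

variable (m : ℕ) (hℓ : ℓ = 2*m+1) (hedge : ∀ n, wn ℓ w n + wn ℓ w (n+1) ≤ k)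
  (hWm : Wn ℓ w ≤ k * m) (hk : 0 < k)

include hedge in
lemma C_total : 2 * Wn ℓ w + C ℓ k w ℓ = ℓ * k := by
  have h : ∀ j, wn ℓ w j + wn ℓ w (j+1) + capf ℓ k w j = k := by
    intro j
    have := hedge j
    unfold capf
    omega
  have : ∑ j ∈ Finset.range ℓ, (wn ℓ w j + wn ℓ w (j+1) + capf ℓ k w j) = ℓ * k := by
    simp [h, Finset.sum_const, mul_comm]
  rw [Finset.sum_add_distrib, Finset.sum_add_distrib, sum_wn_shift] at this
  unfold Wn C at *
  omega

include hℓ hedge hWm hk in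
lemma T_le_C : T ℓ k w ≤ C ℓ k w ℓ := by
  have htot := C_total ℓ k w hedge
  have hWT : Wn ℓ w + T ℓ k w ≤ k * m := by
    have hdm := Nat.div_add_mod (Wn ℓ w) k
    rcases Nat.eq_zero_or_pos (Wn ℓ w % k) with h0 | h0
    · have : T ℓ k w = 0 := by unfold T; rw [h0]; simp
      omega
    · have hmlt : Wn ℓ w % k < k := Nat.mod_lt _ hk
      have hT : T ℓ k w = k - Wn ℓ w % k := by
        unfold T
        exact Nat.mod_eq_of_lt (by omega)
      have hdiv : Wn ℓ w / k < m := by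
        by_contra hcon
        push_neg at hcon
        have : k * m ≤ k * (Wn ℓ w / k) := Nat.mul_le_mul_left _ hcon
        omega
      have hexp : k * (Wn ℓ w / k + 1) = k * (Wn ℓ w / k) + k := by ring
      have : Wn ℓ w + T ℓ k w = k * (Wn ℓ w / k + 1) := by omega
      have : k * (Wn ℓ w / k + 1) ≤ k * m := Nat.mul_le_mul_left _ (by omega)
      omega
  have : k * m + k * m ≤ ℓ * k := by
    rw [hℓ]; ring_nf; nlinarith
  omega

include hℓ hedge hWm hk in
lemma s_ell_dvd : k ∣ s ℓ k w ℓ := by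
  have hsum : s ℓ k w ℓ = Wn ℓ w + T ℓ k w := by
    unfold s
    rw [Finset.sum_add_distrib, sum_t]
    have := T_le_C ℓ k w m hℓ hedge hWm hk
    unfold Wn
    omega
  rw [hsum]
  have hdm := Nat.div_add_mod (Wn ℓ w) k
  rcases Nat.eq_zero_or_pos (Wn ℓ w % k) with h0 | h0
  · have hT : T ℓ k w = 0 := by unfold T; rw [h0]; simp
    exact ⟨Wn ℓ w / k, by omega⟩
  · have hmlt : Wn ℓ w % k < k := Nat.mod_lt _ hk
    have hT : T ℓ k w = k - Wn ℓ w % k := by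
      unfold T; exact Nat.mod_eq_of_lt (by omega)
    have hexp : k * (Wn ℓ w / k + 1) = k * (Wn ℓ w / k) + k := by ring
    exact ⟨Wn ℓ w / k + 1, by omega⟩

include hℓ hedge hWm hk in
lemma A_ell : A ℓ k w ℓ = A ℓ k w 0 := by
  obtain ⟨c, hc⟩ := s_ell_dvd ℓ k w m hℓ hedge hWm hk
  unfold A
  rw [wn_ell]
  have hs0 : s ℓ k w 0 = 0 := by simp [s]
  apply Finset.image_congr
  intro r _
  rw [hc, hs0]
  push_cast
  simp

end hyp2

end Stmt19Aux


/-- The weighted chromatic number of an odd cycle of length `ℓ ≥ 5` with positive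
weights `w` equals `max(max_i (w i + w (i+1)), ⌈2·(∑ w)/(ℓ-1)⌉)` (ceiling via natural
division). -/
theorem stmt19 (ℓ : ℕ) [NeZero ℓ] (hℓ : 5 ≤ ℓ) (hodd : Odd ℓ)
    (w : ZMod ℓ → ℕ) (hw : ∀ i, 1 ≤ w i) :
    sInf {k : ℕ | ∃ S : Fin k → Finset (ZMod ℓ),
        (∀ j : Fin k, ∀ a ∈ S j, ∀ b ∈ S j, ¬ (a = b + 1 ∨ b = a + 1)) ∧
        (∀ i : ZMod ℓ, w i ≤ (Finset.univ.filter (fun j => i ∈ S j)).card)} =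
      max (Finset.univ.sup (fun i : ZMod ℓ => w i + w (i + 1)))
        ((2 * ∑ i : ZMod ℓ, w i + ℓ - 2) / (ℓ - 1)) := by
  classical
  obtain ⟨m, hm⟩ := hodd
  have hm2 : 2 ≤ m := by omega
  haveI : Fact (1 < ℓ) := ⟨by omega⟩
  set W := ∑ i : ZMod ℓ, w i with hW
  set ω := Finset.univ.sup (fun i : ZMod ℓ => w i + w (i + 1)) with hω
  set q := (2 * W + ℓ - 2) / (ℓ - 1) with hq
  have hωle : ∀ i : ZMod ℓ, w i + w (i + 1) ≤ ω := by
    intro i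
    rw [hω]
    exact Finset.le_sup (f := fun i : ZMod ℓ => w i + w (i + 1)) (Finset.mem_univ i)
  have hω2 : 2 ≤ ω := le_trans (by have := hw 0; have := hw (0 + 1); omega) (hωle 0)
  set K := max ω q with hK
  have hωK : ω ≤ K := le_max_left _ _
  have hqK : q ≤ K := le_max_right _ _
  have hK0 : 0 < K := by omega
  haveI : NeZero K := ⟨by omega⟩
  have hedge : ∀ n : ℕ, Stmt19Aux.wn ℓ w n + Stmt19Aux.wn ℓ w (n+1) ≤ K := by
    intro n
    have h := hωle ((n : ZMod ℓ))
    unfold Stmt19Aux.wn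
    push_cast
    omega
  have hwpos : ∀ n : ℕ, 1 ≤ Stmt19Aux.wn ℓ w n := fun n => hw _
  have hWnW : Stmt19Aux.Wn ℓ w = W := by
    rw [hW]
    exact Stmt19Aux.sum_range_cast w
  have h2Wq : 2 * W ≤ (ℓ - 1) * q := by
    have hdm := Nat.div_add_mod (2 * W + ℓ - 2) (ℓ - 1)
    have hmlt : (2 * W + ℓ - 2) % (ℓ - 1) < ℓ - 1 := Nat.mod_lt _ (by omega)
    rw [← hq] at hdm
    omega
  have hWKm : W ≤ K * m := by
    have h1 : (ℓ - 1) * q ≤ (ℓ - 1) * K := Nat.mul_le_mul_left _ hqK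
    have hl1 : ℓ - 1 = 2 * m := by omega
    have h2 : (ℓ - 1) * K = 2 * (K * m) := by rw [hl1]; ring
    omega
  have hWm : Stmt19Aux.Wn ℓ w ≤ K * m := hWnW ▸ hWKm
  have hmem : K ∈ {k : ℕ | ∃ S : Fin k → Finset (ZMod ℓ),
      (∀ j : Fin k, ∀ a ∈ S j, ∀ b ∈ S j, ¬ (a = b + 1 ∨ b = a + 1)) ∧
      (∀ i : ZMod ℓ, w i ≤ (Finset.univ.filter (fun j => i ∈ S j)).card)} := by
    refine ⟨fun j => Finset.univ.filter
      (fun i : ZMod ℓ => ((j : ℕ) : ZMod K) ∈ Stmt19Aux.A ℓ K w i.val), ?_, ?_⟩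
    · have key : ∀ (a b : ZMod ℓ), a = b + 1 → ∀ c : ZMod K,
          c ∈ Stmt19Aux.A ℓ K w a.val → c ∈ Stmt19Aux.A ℓ K w b.val → False := by
        intro a b hab c h1 h2
        have hbv : b.val < ℓ := ZMod.val_lt b
        have hav : a.val = (b.val + 1) % ℓ := by
          rw [hab, ZMod.val_add, ZMod.val_one]
        rcases Nat.lt_or_ge (b.val + 1) ℓ with hlt | hge
        · rw [Nat.mod_eq_of_lt hlt] at hav
          exact Stmt19Aux.disjA ℓ K w hedge hwpos hK0 b.val c h2 (hav ▸ h1)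
        · have hbl : b.val + 1 = ℓ := by omega
          have hav0 : a.val = 0 := by rw [hav, hbl, Nat.mod_self]
          have hA : Stmt19Aux.A ℓ K w ℓ = Stmt19Aux.A ℓ K w 0 :=
            Stmt19Aux.A_ell ℓ K w m hm hedge hWm hK0
          apply Stmt19Aux.disjA ℓ K w hedge hwpos hK0 b.val c h2
          rw [hbl, hA]
          rw [hav0] at h1
          exact h1
      intro j a ha b hb h
      rw [Finset.mem_filter] at ha hb
      rcases h with h | h
      · exact key a b h _ ha.2 hb.2
      · exact key b a h _ hb.2 ha.2
    · intro i
      have hcard : (Finset.univ.filter (fun j : Fin K =>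
          ((j : ℕ) : ZMod K) ∈ Stmt19Aux.A ℓ K w i.val)).card
          = (Stmt19Aux.A ℓ K w i.val).card := by
        refine Finset.card_nbij' (i := fun j : Fin K => ((j : ℕ) : ZMod K))
          (j := fun a : ZMod K => (⟨a.val, ZMod.val_lt a⟩ : Fin K)) ?_ ?_ ?_ ?_
        · intro a ha
          exact (Finset.mem_filter.mp ha).2
        · intro a ha
          refine Finset.mem_filter.mpr ⟨Finset.mem_univ _, ?_⟩
          simpa [ZMod.natCast_rightInverse a] using ha
        · intro a _
          apply Fin.ext
          simpa using ZMod.val_cast_of_lt a.isLt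
        · intro a _
          simpa using ZMod.natCast_rightInverse a
      have hfeq : (Finset.univ.filter (fun j : Fin K => i ∈ Finset.univ.filter
          (fun i' : ZMod ℓ => ((j : ℕ) : ZMod K) ∈ Stmt19Aux.A ℓ K w i'.val)))
          = (Finset.univ.filter (fun j : Fin K =>
          ((j : ℕ) : ZMod K) ∈ Stmt19Aux.A ℓ K w i.val)) := by
        apply Finset.filter_congr
        intro j _
        simp
      rw [hfeq, hcard, Stmt19Aux.card_A ℓ K w hedge hwpos hK0 i.val]
      unfold Stmt19Aux.wn
      rw [ZMod.natCast_rightInverse i]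
  have hlb : ∀ k ∈ {k : ℕ | ∃ S : Fin k → Finset (ZMod ℓ),
      (∀ j : Fin k, ∀ a ∈ S j, ∀ b ∈ S j, ¬ (a = b + 1 ∨ b = a + 1)) ∧
      (∀ i : ZMod ℓ, w i ≤ (Finset.univ.filter (fun j => i ∈ S j)).card)}, K ≤ k := by
    intro k hk'
    obtain ⟨S, hstab, hcov⟩ := hk'
    have hedgek : ω ≤ k := by
      rw [hω]
      apply Finset.sup_le
      intro i _
      have hdisj : Disjoint (Finset.univ.filter (fun j => i ∈ S j))
          (Finset.univ.filter (fun j => i + 1 ∈ S j)) := by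
        rw [Finset.disjoint_left]
        intro j hj1 hj2
        rw [Finset.mem_filter] at hj1 hj2
        exact hstab j i hj1.2 (i + 1) hj2.2 (Or.inr rfl)
      calc w i + w (i + 1)
          ≤ (Finset.univ.filter (fun j => i ∈ S j)).card
            + (Finset.univ.filter (fun j => i + 1 ∈ S j)).card :=
            add_le_add (hcov i) (hcov (i + 1))
        _ = ((Finset.univ.filter (fun j => i ∈ S j))
            ∪ (Finset.univ.filter (fun j => i + 1 ∈ S j))).card :=
            (Finset.card_union_of_disjoint hdisj).symm
        _ ≤ Fintype.card (Fin k) := Finset.card_le_univ _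
        _ = k := Fintype.card_fin k
    have hcnt : q ≤ k := by
      have hWsum : W ≤ ∑ j : Fin k, (S j).card := by
        calc W = ∑ i : ZMod ℓ, w i := hW
          _ ≤ ∑ i : ZMod ℓ, (Finset.univ.filter (fun j => i ∈ S j)).card :=
              Finset.sum_le_sum (fun i _ => hcov i)
          _ = ∑ i : ZMod ℓ, ∑ j : Fin k, (if i ∈ S j then 1 else 0) := by
              refine Finset.sum_congr rfl fun i _ => ?_
              rw [Finset.card_filter]
          _ = ∑ j : Fin k, ∑ i : ZMod ℓ, (if i ∈ S j then 1 else 0) := Finset.sum_comm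
          _ = ∑ j : Fin k, (S j).card := by
              refine Finset.sum_congr rfl fun j _ => Stmt19Aux.sum_ind _
      have hSm : ∀ j : Fin k, (S j).card ≤ m := by
        intro j
        have := Stmt19Aux.stable_card (S j) (hstab j)
        omega
      have hsum2 : ∑ j : Fin k, (S j).card ≤ k * m := by
        calc ∑ j : Fin k, (S j).card ≤ ∑ _j : Fin k, m :=
              Finset.sum_le_sum fun j _ => hSm j
          _ = k * m := by simp [Finset.sum_const, Fintype.card_fin, mul_comm]
      have h2W : 2 * W ≤ k * (ℓ - 1) := by
        have hl1 : ℓ - 1 = 2 * m := by omega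
        have hexp : k * (ℓ - 1) = 2 * (k * m) := by rw [hl1]; ring
        omega
      rw [hq]
      have hlt : 2 * W + ℓ - 2 < (k + 1) * (ℓ - 1) := by
        have hexp : (k + 1) * (ℓ - 1) = k * (ℓ - 1) + (ℓ - 1) := by ring
        omega
      exact Nat.lt_succ_iff.mp ((Nat.div_lt_iff_lt_mul (by omega)).mpr hlt)
    exact max_le hedgek hcnt
  exact le_antisymm (Nat.sInf_le hmem) (le_csInf ⟨K, hmem⟩ hlb)
end
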